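/- Let B be a bounded skew-adjoint operator (B^T = −B) and D an operator with D^T = −D − |δ⟩⟨δ| such that I − 2DB and I + 2BD^T are invertible. Then the scalar Q = 2⟨δ, (I + 2BD^T)^{-1} B δ⟩ satisfies Q = −Q + Q²/(1+Q), hence Q ∈ {0, −2}; and along any continuous path t ↦ tB from 0 to B along which the relevant inverses exist, Q varies continuously from 0, forcing Q = 0. -/
import Mathlib


open scoped InnerProductSpace
open ContinuousLinearMap

private lemma isUnit_one_sub_swap {R : Type*} [Ring R] {x y : R}
    (h : IsUnit (1 - x * y)) : IsUnit (1 - y * x) := by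
  refine ⟨⟨1 - y * x, 1 + y * h.unit.inv * x, ?_, ?_⟩, rfl⟩
  · calc
      (1 - y * x) * (1 + y * (IsUnit.unit h).inv * x) =
          1 - y * x + y * ((1 - x * y) * h.unit.inv) * x := by noncomm_ring
      _ = 1 := by simp only [Units.inv_eq_val_inv, IsUnit.mul_val_inv, mul_one, sub_add_cancel]
  · calc
      (1 + y * (IsUnit.unit h).inv * x) * (1 - y * x) =
          1 - y * x + y * (h.unit.inv * (1 - x * y)) * x := by noncomm_ring
      _ = 1 := by simp only [Units.inv_eq_val_inv, IsUnit.val_inv_mul, mul_one, sub_add_cancel]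

private lemma dichotomy {H : Type*} [NormedAddCommGroup H] [InnerProductSpace ℝ H]
    [CompleteSpace H]
    (B D : H →L[ℝ] H) (δ : H)
    (hB : adjoint B = -B)
    (hD : adjoint D = -D - (innerSL ℝ δ).smulRight δ)
    (Qf : ℝ → ℝ)
    (hQf : ∀ t : ℝ, Qf t =
      2 * ⟪δ, (Ring.inverse ((1 : H →L[ℝ] H) + (2 * t) • (B ∘L adjoint D))) (t • B δ)⟫_ℝ)
    (hu1 : ∀ t ∈ Set.Icc (0 : ℝ) 1, IsUnit ((1 : H →L[ℝ] H) - (2 * t) • (D ∘L B)))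
    (hu2 : ∀ t ∈ Set.Icc (0 : ℝ) 1, IsUnit ((1 : H →L[ℝ] H) + (2 * t) • (B ∘L adjoint D))) :
    ∀ t ∈ Set.Icc (0 : ℝ) 1, Qf t = 0 ∨ Qf t = -2 := by
  intro t ht
  have hQt := hQf t
  set c : ℝ := 2 * t with hc
  set P : H →L[ℝ] H := (innerSL ℝ δ).smulRight δ with hP
  set N : H →L[ℝ] H := 1 - c • (D ∘L B) with hN
  set A : H →L[ℝ] H := 1 + c • (B ∘L adjoint D) with hA
  set M : H →L[ℝ] H := 1 - c • (B ∘L D) with hM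
  have hNu : IsUnit N := hu1 t ht
  have hAu : IsUnit A := hu2 t ht
  -- M is a unit, by the 1 - xy ↦ 1 - yx swap
  have hMu : IsUnit M := by
    have h1 : N = 1 - D * (c • B) := by
      rw [hN, ContinuousLinearMap.mul_def, comp_smul]
    have h2 : M = 1 - (c • B) * D := by
      rw [hM, ContinuousLinearMap.mul_def, smul_comp]
    rw [h2]; exact isUnit_one_sub_swap (h1 ▸ hNu)
  -- adjoint A = N
  have hAadj : adjoint A = N := by
    have : adjoint A = adjoint (1 : H →L[ℝ] H) + c • adjoint (B ∘L adjoint D) := by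
      rw [hA]; rw [map_add]
      congr 1
      exact (adjoint : (H →L[ℝ] H) ≃ₗᵢ⋆[ℝ] (H →L[ℝ] H)).map_smulₛₗ c (B ∘L adjoint D)
    rw [this, adjoint_comp, adjoint_adjoint, hB, hN]
    have h1 : adjoint (1 : H →L[ℝ] H) = 1 := by
      rw [ContinuousLinearMap.one_def, adjoint_id]
    rw [h1, comp_neg]
    module
  rw [map_smul, real_inner_smul_right] at hQt
  set y : H := Ring.inverse A (B δ) with hy
  have hQ : Qf t = c * ⟪δ, y⟫_ℝ := by
    rw [hQt, hc]; ring
  have hAy : A y = B δ := by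
    have := congrArg (fun (T : H →L[ℝ] H) => T (B δ)) (Ring.mul_inverse_cancel A hAu)
    simpa [ContinuousLinearMap.mul_apply] using this
  -- A = M - c • (B ∘L P)
  have hAdec : A = M - c • (B ∘L P) := by
    rw [hA, hM, hD]
    rw [show B ∘L (-D - P) = -(B ∘L D) - B ∘L P by
      ext x
      simp only [ContinuousLinearMap.comp_apply, ContinuousLinearMap.sub_apply,
        ContinuousLinearMap.neg_apply, map_sub, map_neg]]
    module
  have hPy : P y = ⟪δ, y⟫_ℝ • δ := by
    rw [hP]; simp only [ContinuousLinearMap.smulRight_apply, innerSL_apply_apply]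
  have hMy : M y = (1 + Qf t) • B δ := by
    have h0 : M y - c • (B (P y)) = B δ := by
      rw [← hAy, hAdec]
      simp only [ContinuousLinearMap.sub_apply, ContinuousLinearMap.smul_apply,
        ContinuousLinearMap.comp_apply]
    have h1 := eq_add_of_sub_eq h0
    rw [hPy, map_smul, smul_smul] at h1
    rw [h1, hQ, add_smul, one_smul]
  set z : H := Ring.inverse N δ with hz
  have hNz : N z = δ := by
    have := congrArg (fun (T : H →L[ℝ] H) => T δ) (Ring.mul_inverse_cancel N hNu)
    simpa [ContinuousLinearMap.mul_apply] using this
  have hMBz : M (B z) = B δ := by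
    have hMB : M ∘L B = B ∘L N := by
      rw [hM, hN]
      ext x
      simp only [ContinuousLinearMap.comp_apply, ContinuousLinearMap.sub_apply,
        ContinuousLinearMap.smul_apply, ContinuousLinearMap.one_apply, map_sub, map_smul]
    have := congrArg (fun (T : H →L[ℝ] H) => T z) hMB
    simp only [ContinuousLinearMap.comp_apply] at this
    rw [this, hNz]
  have hyz : y = (1 + Qf t) • B z := by
    have h1 : M ((1 + Qf t) • B z) = M y := by
      rw [map_smul, hMBz, hMy]
    have h2 := congrArg (fun v => Ring.inverse M v) h1
    have h3 : ∀ v : H, Ring.inverse M (M v) = v := by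
      intro v
      have := congrArg (fun (T : H →L[ℝ] H) => T v) (Ring.inverse_mul_cancel M hMu)
      simpa [ContinuousLinearMap.mul_apply] using this
    simpa [h3] using h2.symm
  have hinner1 : ⟪δ, y⟫_ℝ = (1 + Qf t) * ⟪δ, B z⟫_ℝ := by
    rw [hyz, real_inner_smul_right]
  have hinner2 : ⟪δ, B z⟫_ℝ = -⟪δ, y⟫_ℝ := by
    have hBz : ⟪δ, B z⟫_ℝ = -⟪B δ, z⟫_ℝ := by
      have : (B : H →L[ℝ] H) = -(adjoint B) := by rw [hB, neg_neg]
      calc ⟪δ, B z⟫_ℝ = ⟪δ, (-(adjoint B)) z⟫_ℝ := by rw [← this]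
        _ = -⟪δ, (adjoint B) z⟫_ℝ := by simp [inner_neg_right]
        _ = -⟪B δ, z⟫_ℝ := by rw [adjoint_inner_right]
    have hAyz : ⟪B δ, z⟫_ℝ = ⟪δ, y⟫_ℝ := by
      calc ⟪B δ, z⟫_ℝ = ⟪A y, z⟫_ℝ := by rw [hAy]
        _ = ⟪y, (adjoint A) z⟫_ℝ := by rw [adjoint_inner_right]
        _ = ⟪y, N z⟫_ℝ := by rw [hAadj]
        _ = ⟪y, δ⟫_ℝ := by rw [hNz]
        _ = ⟪δ, y⟫_ℝ := real_inner_comm _ _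
    rw [hBz, hAyz]
  have ha := hinner1
  rw [hinner2] at ha
  -- ha : ⟪δ,y⟫ = (1 + Qf t) * -⟪δ,y⟫
  have h4 : Qf t = -(1 + Qf t) * Qf t := by
    linear_combination c * ha + (2 + Qf t) * hQ
  have hprod : Qf t * (Qf t + 2) = 0 := by linear_combination h4
  rcases mul_eq_zero.mp hprod with h | h
  · exact Or.inl h
  · exact Or.inr (by linarith)

/-- Key step in the symplectic Pfaffian–determinant identity: the scalar
`Q(t) = 2⟨δ, (I + 2tB Dᵀ)⁻¹ (tB) δ⟩` satisfies the self-consistency equation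
`Q = -Q + Q²/(1+Q)` at `t = 1`, hence `Q ∈ {0, -2}`, and by continuity along the
path `t ↦ tB` starting from `Q(0) = 0` one gets `Q = 0`. -/
theorem stmt15 {H : Type*} [NormedAddCommGroup H] [InnerProductSpace ℝ H] [CompleteSpace H]
    (B D : H →L[ℝ] H) (δ : H)
    (hB : adjoint B = -B)
    (hD : adjoint D = -D - (innerSL ℝ δ).smulRight δ)
    (Qf : ℝ → ℝ)
    (hQf : ∀ t : ℝ, Qf t =
      2 * ⟪δ, (Ring.inverse ((1 : H →L[ℝ] H) + (2 * t) • (B ∘L adjoint D))) (t • B δ)⟫_ℝ)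
    (hu1 : ∀ t ∈ Set.Icc (0 : ℝ) 1, IsUnit ((1 : H →L[ℝ] H) - (2 * t) • (D ∘L B)))
    (hu2 : ∀ t ∈ Set.Icc (0 : ℝ) 1, IsUnit ((1 : H →L[ℝ] H) + (2 * t) • (B ∘L adjoint D)))
    (hcont : ContinuousOn Qf (Set.Icc 0 1)) :
    (Qf 1 = -Qf 1 + (Qf 1) ^ 2 / (1 + Qf 1)) ∧ (Qf 1 = 0 ∨ Qf 1 = -2) ∧ Qf 1 = 0 := by
  have hdich := dichotomy B D δ hB hD Qf hQf hu1 hu2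
  have h0 : Qf 0 = 0 := by
    rw [hQf 0]
    simp
  have h1 : Qf 1 = 0 := by
    rcases hdich 1 (by norm_num) with h | h
    · exact h
    · exfalso
      have hsub : Set.Icc (Qf 1) (Qf 0) ⊆ Qf '' Set.Icc 0 1 :=
        intermediate_value_Icc' (by norm_num) hcont
      have hmem : (-1 : ℝ) ∈ Set.Icc (Qf 1) (Qf 0) := by
        rw [h, h0]; constructor <;> norm_num
      rcases hsub hmem with ⟨s, hs, hQs⟩
      rcases hdich s hs with h' | h' <;> rw [hQs] at h' <;> norm_num at h'
  refine ⟨?_, Or.inl h1, h1⟩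
  rw [h1]; norm_num
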